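/- Let χ be an n×n integer matrix such that χ, viewed over ℝ, is diagonalizable with all real eigenvalues contained in the interval [0,1]. Then χ is idempotent, i.e. χ² = χ. -/
import Mathlib

open Matrix in
/-- For `x ∈ [0,1]`, if `x^k = x^m` with `k < m`, then `x * x = x`. -/
theorem aux_pow_eq (x : ℝ) (hx0 : 0 ≤ x) (hx1 : x ≤ 1) {k m : ℕ} (hkm : k < m)
    (h : x ^ k = x ^ m) : x * x = x := by
  have h1 : x ^ (k + 1) = x ^ k := by
    refine le_antisymm (pow_le_pow_of_le_one hx0 hx1 (Nat.le_succ k)) ?_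
    rw [h]
    exact pow_le_pow_of_le_one hx0 hx1 hkm
  have h2 : x ^ k * (x - 1) = 0 := by
    have := h1
    rw [pow_succ] at this
    nlinarith
  rcases mul_eq_zero.mp h2 with h3 | h3
  · have hx : x = 0 := by
      rcases pow_eq_zero_iff'.mp h3 with ⟨hx, _⟩
      exact hx
    simp [hx]
  · have hx : x = 1 := by linarith
    simp [hx]

/-- An integer square matrix which, viewed over `ℝ`, is diagonalizable with all (real)
eigenvalues in the interval `[0,1]`, is idempotent. -/
theorem stmt1 (n : ℕ) (χ : Matrix (Fin n) (Fin n) ℤ)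
    (P : Matrix (Fin n) (Fin n) ℝ) (d : Fin n → ℝ)
    (hP : IsUnit P.det)
    (hdiag : χ.map (Int.cast : ℤ → ℝ) = P * Matrix.diagonal d * P⁻¹)
    (hd : ∀ i, d i ∈ Set.Icc (0 : ℝ) 1) :
    χ * χ = χ := by
  have hPP : P * P⁻¹ = 1 := Matrix.mul_nonsing_inv P hP
  have hPP' : P⁻¹ * P = 1 := Matrix.nonsing_inv_mul P hP
  have hmapmul : ∀ A B : Matrix (Fin n) (Fin n) ℤ,
      (A * B).map (Int.cast : ℤ → ℝ) = A.map Int.cast * B.map Int.cast := by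
    intro A B
    exact Matrix.map_mul (f := Int.castRingHom ℝ)
  have hconj : ∀ A B : Matrix (Fin n) (Fin n) ℝ,
      (P * A * P⁻¹) * (P * B * P⁻¹) = P * (A * B) * P⁻¹ := by
    intro A B
    calc (P * A * P⁻¹) * (P * B * P⁻¹) = P * A * (P⁻¹ * P) * B * P⁻¹ := by noncomm_ring
      _ = P * (A * B) * P⁻¹ := by rw [hPP']; noncomm_ring
  have hcancel : ∀ A : Matrix (Fin n) (Fin n) ℝ, P⁻¹ * (P * A * P⁻¹) * P = A := by
    intro A
    calc P⁻¹ * (P * A * P⁻¹) * P = (P⁻¹ * P) * A * (P⁻¹ * P) := by noncomm_ring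
      _ = A := by rw [hPP']; noncomm_ring
  -- powers
  have hpow : ∀ k : ℕ, (χ ^ k).map (Int.cast : ℤ → ℝ)
      = P * Matrix.diagonal (fun i => d i ^ k) * P⁻¹ := by
    intro k
    induction k with
    | zero =>
        have : (χ ^ 0).map (Int.cast : ℤ → ℝ) = (1 : Matrix (Fin n) (Fin n) ℝ) := by
          rw [pow_zero]
          exact Matrix.map_one _ (Int.cast_zero) (Int.cast_one)
        rw [this]
        simp [Matrix.diagonal_one, hPP]
    | succ k ih =>
        rw [pow_succ, hmapmul, ih, hdiag, hconj, Matrix.diagonal_mul_diagonal]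
        have : (fun i => d i ^ k * d i) = fun i => d i ^ (k + 1) := by
          funext i; rw [← pow_succ]
        rw [this]
  -- bound on entries of powers
  set C : ℝ := ∑ i : Fin n, ∑ j : Fin n, ∑ l : Fin n, |P i l| * |P⁻¹ l j| with hC
  have hbound : ∀ (k : ℕ) (i j : Fin n), (χ ^ k) i j ∈ Finset.Icc (-⌈C⌉) ⌈C⌉ := by
    intro k i j
    have hentry : (((χ ^ k) i j : ℤ) : ℝ) = ∑ l : Fin n, P i l * d l ^ k * P⁻¹ l j := by
      have h1 : (((χ ^ k) i j : ℤ) : ℝ) = ((χ ^ k).map (Int.cast : ℤ → ℝ)) i j := rfl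
      rw [h1, hpow k, Matrix.mul_apply]
      congr 1
      funext l
      rw [Matrix.mul_diagonal]
    have habs : |(((χ ^ k) i j : ℤ) : ℝ)| ≤ ∑ l : Fin n, |P i l| * |P⁻¹ l j| := by
      rw [hentry]
      refine le_trans (Finset.abs_sum_le_sum_abs _ _) ?_
      apply Finset.sum_le_sum
      intro l _
      have hdl := hd l
      have hdk0 : (0:ℝ) ≤ d l ^ k := pow_nonneg hdl.1 k
      have hdk1 : d l ^ k ≤ 1 := pow_le_one₀ hdl.1 hdl.2
      calc |P i l * d l ^ k * P⁻¹ l j| = |P i l| * |d l ^ k| * |P⁻¹ l j| := by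
            rw [abs_mul, abs_mul]
        _ ≤ |P i l| * 1 * |P⁻¹ l j| := by
            have : |d l ^ k| ≤ 1 := by rw [abs_of_nonneg hdk0]; exact hdk1
            gcongr
        _ = |P i l| * |P⁻¹ l j| := by ring
    have hCle : (∑ l : Fin n, |P i l| * |P⁻¹ l j|) ≤ C := by
      rw [hC]
      have h1 : (∑ l : Fin n, |P i l| * |P⁻¹ l j|)
          ≤ ∑ j' : Fin n, ∑ l : Fin n, |P i l| * |P⁻¹ l j'| := by
        refine Finset.single_le_sum (f := fun j' => ∑ l : Fin n, |P i l| * |P⁻¹ l j'|)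
          (fun j' _ => ?_) (Finset.mem_univ j)
        positivity
      refine le_trans h1 ?_
      refine Finset.single_le_sum (f := fun i' => ∑ j' : Fin n, ∑ l : Fin n, |P i' l| * |P⁻¹ l j'|)
        (fun i' _ => ?_) (Finset.mem_univ i)
      positivity
    have habs2 : |(χ ^ k) i j| ≤ ⌈C⌉ := by
      have h9 : |(((χ ^ k) i j : ℤ) : ℝ)| ≤ (⌈C⌉ : ℝ) :=
        le_trans (le_trans habs hCle) (Int.le_ceil C)
      have h10 : ((|(χ ^ k) i j| : ℤ) : ℝ) ≤ (⌈C⌉ : ℝ) := by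
        rw [Int.cast_abs]; exact h9
      exact_mod_cast h10
    rw [Finset.mem_Icc]
    exact abs_le.mp habs2
  -- pigeonhole
  have hfin : ∃ k m : ℕ, k ≠ m ∧ χ ^ k = χ ^ m := by
    let F : ℕ → (Fin n → Fin n → (Finset.Icc (-⌈C⌉) ⌈C⌉ : Finset ℤ)) :=
      fun k i j => ⟨(χ ^ k) i j, hbound k i j⟩
    obtain ⟨k, m, hkm, hF⟩ := Finite.exists_ne_map_eq_of_infinite F
    refine ⟨k, m, hkm, ?_⟩
    funext i j
    have := congrFun (congrFun hF i) j
    exact Subtype.ext_iff.mp this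
  obtain ⟨k, m, hkm, hχ⟩ := hfin
  wlog hlt : k < m generalizing k m
  · exact this m k (Ne.symm hkm) hχ.symm (by omega)
  -- extract d i ^ k = d i ^ m
  have hdiageq : (fun i => d i ^ k) = (fun i => d i ^ m) := by
    apply Matrix.diagonal_injective
    have h1 := hpow k
    have h2 := hpow m
    rw [hχ, h2] at h1
    calc Matrix.diagonal (fun i => d i ^ k)
        = P⁻¹ * (P * Matrix.diagonal (fun i => d i ^ k) * P⁻¹) * P := (hcancel _).symm
      _ = P⁻¹ * (P * Matrix.diagonal (fun i => d i ^ m) * P⁻¹) * P := by rw [← h1]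
      _ = Matrix.diagonal (fun i => d i ^ m) := hcancel _
  have hdd : ∀ i, d i * d i = d i := by
    intro i
    exact aux_pow_eq (d i) (hd i).1 (hd i).2 hlt (congrFun hdiageq i)
  -- conclude
  apply Matrix.map_injective (f := (Int.cast : ℤ → ℝ)) Int.cast_injective
  show (χ * χ).map (Int.cast : ℤ → ℝ) = χ.map (Int.cast : ℤ → ℝ)
  rw [hmapmul, hdiag, hconj, Matrix.diagonal_mul_diagonal,
    show (fun i => d i * d i) = d from funext hdd]
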